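/- Let ψ be a convex Archimedean generator (ψ(0)=1, ψ decreasing to 0, convex). If x ↦ 1 − ψ(1/x) is regularly varying at infinity with index −α, then α ≤ 1. -/

import Mathlib

open Filter Set

theorem convex_generator_regvar_index_le_one
    (ψ : ℝ → ℝ) (α : ℝ)
    (hcont : ContinuousOn ψ (Set.Ici 0))
    (hconv : ConvexOn ℝ (Set.Ici 0) ψ)
    (hψ0 : ψ 0 = 1)
    (hψ_lim : Tendsto ψ atTop (nhds 0))
    (hanti : StrictAntiOn ψ {x | 0 ≤ x ∧ 0 < ψ x})
    (hRV : ∀ c > (0:ℝ), Tendsto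
      (fun x => (1 - ψ (1 / (c * x))) / (1 - ψ (1 / x)))
      atTop (nhds (c ^ (-α)))) :
    α ≤ 1 := by
  -- ψ t < 1 for t > 0
  have hlt1 : ∀ t : ℝ, 0 < t → ψ t < 1 := by
    intro t ht
    by_contra h
    push_neg at h
    have hpos : 0 < ψ t := lt_of_lt_of_le one_pos h
    have := hanti (by simp [hψ0] : (0:ℝ) ∈ {x | 0 ≤ x ∧ 0 < ψ x})
      (⟨ht.le, hpos⟩ : t ∈ {x | 0 ≤ x ∧ 0 < ψ x}) ht
    rw [hψ0] at this
    linarith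
  -- eventual lower bound 1/2 on the ratio for c = 2
  have hev : ∀ᶠ x in atTop, (1:ℝ)/2 ≤ (1 - ψ (1 / (2 * x))) / (1 - ψ (1 / x)) := by
    filter_upwards [eventually_gt_atTop (0:ℝ)] with x hx
    set s : ℝ := 1 / (2 * x) with hs
    set t : ℝ := 1 / x with htdef
    have hspos : 0 < s := by positivity
    have htpos : 0 < t := by positivity
    have hst : s < t := by
      rw [hs, htdef]
      apply div_lt_div_of_pos_left one_pos hx
      linarith
    have hA : 0 < 1 - ψ s := by linarith [hlt1 s hspos]
    have hB : 0 < 1 - ψ t := by linarith [hlt1 t htpos]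
    have hsec := hconv.secant_mono (Set.self_mem_Ici) (Set.mem_Ici.2 hspos.le)
      (Set.mem_Ici.2 htpos.le) hspos.ne' htpos.ne' hst.le
    rw [hψ0, sub_zero, sub_zero] at hsec
    -- hsec : (ψ s - 1) / s ≤ (ψ t - 1) / t
    have hst2 : s / t = 1 / 2 := by
      rw [hs, htdef]
      field_simp
    have h2 : (1 - ψ t) * s ≤ (1 - ψ s) * t := by
      rw [div_le_div_iff₀ hspos htpos] at hsec
      linarith
    rw [div_le_div_iff₀ two_pos hB]
    calc 1 * (1 - ψ t) = (1 - ψ t) := one_mul _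
      _ ≤ (1 - ψ s) * t / s := by
          rw [le_div_iff₀ hspos]; linarith
      _ = (1 - ψ s) * (t / s) := by ring
      _ = (1 - ψ s) * 2 := by
          congr 1
          rw [htdef, hs]
          field_simp
  have hle := ge_of_tendsto (hRV 2 two_pos) hev
  -- hle : 1/2 ≤ 2 ^ (-α)
  have h21 : (2:ℝ) ^ (-1 : ℝ) ≤ (2:ℝ) ^ (-α) := by
    rwa [Real.rpow_neg_one, inv_eq_one_div]
  have := (Real.rpow_le_rpow_left_iff (one_lt_two)).mp h21
  linarith
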